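/- Let σ(r) = r/‖r‖² denote the inversion at the unit sphere in ℝ³ and let û(r) = ‖r‖^{−1} u(σ(r)) denote the Kelvin transform of a function u. Then for all m ∈ ℤ and n ∈ ℕ₀, the Kelvin transform of the internal bi-cyclide harmonic of the first kind satisfies Ĝ_{m,n}(r) = (−1)^n G_{m,n}(r) for all r in the domain of G_{m,n} with σ(r) also in that domain. -/

import Mathlib

noncomputable section

open Complex Set Filter Topology MeasureTheory

/-- The complementary modulus `k' = √(1 - k²)`. -/
def complMod (k : ℝ) : ℝ := Real.sqrt (1 - k ^ 2)

/-- Data for the Jacobian elliptic functions `sn`, `cn`, `dn` (first argument the modulus `k`)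
together with the complete elliptic integral of the first kind `K`.  The functions are
characterized by the first order ODE system `sn' = cn·dn`, `cn' = -sn·dn`, `dn' = -k² sn·cn`
with initial values `sn 0 = 0`, `cn 0 = dn 0 = 1` (valid on the pole-free strip
`|Im z| < K(k')`), they are real on the real axis, and `K k` is the smallest positive
zero of `cn(·,k)`. -/
structure JacobiData where
  sn : ℝ → ℂ → ℂ
  cn : ℝ → ℂ → ℂ
  dn : ℝ → ℂ → ℂ
  K : ℝ → ℝ
  K_pos : ∀ k : ℝ, 0 < k → k < 1 → 0 < K k
  sn_zero : ∀ k : ℝ, sn k 0 = 0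
  cn_zero : ∀ k : ℝ, cn k 0 = 1
  dn_zero : ∀ k : ℝ, dn k 0 = 1
  sn_hasDerivAt : ∀ k : ℝ, 0 < k → k < 1 → ∀ z : ℂ, |z.im| < K (complMod k) →
    HasDerivAt (sn k) (cn k z * dn k z) z
  cn_hasDerivAt : ∀ k : ℝ, 0 < k → k < 1 → ∀ z : ℂ, |z.im| < K (complMod k) →
    HasDerivAt (cn k) (-(sn k z) * dn k z) z
  dn_hasDerivAt : ∀ k : ℝ, 0 < k → k < 1 → ∀ z : ℂ, |z.im| < K (complMod k) →
    HasDerivAt (dn k) (-(k : ℂ) ^ 2 * sn k z * cn k z) z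
  sn_real : ∀ k : ℝ, 0 < k → k < 1 → ∀ x : ℝ, (sn k (x : ℂ)).im = 0
  cn_real : ∀ k : ℝ, 0 < k → k < 1 → ∀ x : ℝ, (cn k (x : ℂ)).im = 0
  dn_real : ∀ k : ℝ, 0 < k → k < 1 → ∀ x : ℝ, (dn k (x : ℂ)).im = 0
  cn_K : ∀ k : ℝ, 0 < k → k < 1 → cn k ((K k : ℝ) : ℂ) = 0
  cn_pos : ∀ k : ℝ, 0 < k → k < 1 → ∀ x : ℝ, 0 ≤ x → x < K k → 0 < (cn k (x : ℂ)).re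

namespace JacobiData

variable (J : JacobiData)

/-- `K' = K(k')`, the complementary complete elliptic integral. -/
def Kc (k : ℝ) : ℝ := J.K (complMod k)

/-- `sn(x, k)` for real `x`, as a real number. -/
def snr (k x : ℝ) : ℝ := (J.sn k (x : ℂ)).re

/-- `cn(x, k)` for real `x`, as a real number. -/
def cnr (k x : ℝ) : ℝ := (J.cn k (x : ℂ)).re

/-- `dn(x, k)` for real `x`, as a real number. -/
def dnr (k x : ℝ) : ℝ := (J.dn k (x : ℂ)).re

/-- Glaisher's `sc = sn/cn` (real argument). -/
def scr (k x : ℝ) : ℝ := J.snr k x / J.cnr k x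

/-- Glaisher's `dc = dn/cn` (real argument). -/
def dcr (k x : ℝ) : ℝ := J.dnr k x / J.cnr k x

/-- Glaisher's `nc = 1/cn` (real argument). -/
def ncr (k x : ℝ) : ℝ := (J.cnr k x)⁻¹

/-- The cylindrical coordinate `R` of the point with bi-cyclide coordinates `(s,t)`:
`R = cn(s,k) cn(t,k') / (1 - sn(s,k) dn(t,k'))`. -/
def RR (k s t : ℝ) : ℝ :=
  J.cnr k s * J.cnr (complMod k) t / (1 - J.snr k s * J.dnr (complMod k) t)

/-- The coordinate `z` of the point with bi-cyclide coordinates `(s,t)`: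
`z = dn(s,k) sn(t,k') / (1 - sn(s,k) dn(t,k'))`. -/
def ZZ (k s t : ℝ) : ℝ :=
  J.dnr k s * J.snr (complMod k) t / (1 - J.snr k s * J.dnr (complMod k) t)

end JacobiData

/-- Three-dimensional Euclidean space. -/
abbrev E3 : Type := EuclideanSpace ℝ (Fin 3)

/-- The `z`-axis in `ℝ³`. -/
def zAxis : Set E3 := {p : E3 | p 0 = 0 ∧ p 1 = 0}

/-- The point of `ℝ³` with bi-cyclide coordinates `(s, t, φ)`. -/
def JacobiData.pt (J : JacobiData) (k s t φ : ℝ) : E3 :=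
  (WithLp.equiv 2 (Fin 3 → ℝ)).symm
    ![J.RR k s t * Real.cos φ, J.RR k s t * Real.sin φ, J.ZZ k s t]

/-- `(s, t, φ)` are bi-cyclide coordinates (with modulus `k`) of the point `p ∈ ℝ³`. -/
def JacobiData.IsBicyclide (J : JacobiData) (k : ℝ) (p : E3) (s t φ : ℝ) : Prop :=
  s ∈ Set.Ioo (-J.K k) (J.K k) ∧ t ∈ Set.Ioo (-J.Kc k) (J.Kc k) ∧
    φ ∈ Set.Ioc (-Real.pi) Real.pi ∧
    p 0 = J.RR k s t * Real.cos φ ∧ p 1 = J.RR k s t * Real.sin φ ∧ p 2 = J.ZZ k s t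

/-- The Laplacian of a function on `ℝ³` (sum of the second partial derivatives). -/
def lap {F : Type*} [NormedAddCommGroup F] [NormedSpace ℝ F] (u : E3 → F) (p : E3) : F :=
  ∑ i : Fin 3,
    fderiv ℝ (fun q : E3 => fderiv ℝ u q (EuclideanSpace.single i (1 : ℝ))) p
      (EuclideanSpace.single i (1 : ℝ))

/-- `u` is harmonic on the set `U ⊆ ℝ³`: it is twice continuously differentiable
and satisfies Laplace's equation there. -/
def HarmonicOnSet {F : Type*} [NormedAddCommGroup F] [NormedSpace ℝ F]
    (u : E3 → F) (U : Set E3) : Prop :=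
  ContDiffOn ℝ 2 u U ∧ ∀ p ∈ U, lap u p = 0

/-- The strip `|Im z| < 2K'` minus the branch cuts `(-∞, -K]` and `[K, ∞)`;
the natural domain of analyticity of the Lamé–Wangerin functions with modulus `k`. -/
def JacobiData.lwDomain (J : JacobiData) (k : ℝ) : Set ℂ :=
  {z : ℂ | |z.im| < 2 * J.Kc k ∧ (z.im ≠ 0 ∨ |z.re| < J.K k)}

/-- Data for the Lamé–Wangerin functions `W_ν^n(·,k)` (first argument the modulus `k`,
then the degree `ν ≥ -1/2` and the index `n ∈ ℕ`), together with their derivatives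
`Wd` and the eigenvalues `lam = Λ_ν^n(k)`.  `W_ν^n(·,k)` is the (real valued on `(-K,K)`,
`L²(-K,K)`-normalized) eigenfunction with exactly `n` zeros in `(-K,K)` of
`W'' + (Λ - ν(ν+1) dc²(s,k)) W = 0` belonging to the exponent `ν+1` at both
regular singular endpoints `±K`; it is analytic on the strip `|Im s| < 2K'` minus
the branch cuts `(-∞,-K]`, `[K,∞)`, and satisfies `W(-s) = (-1)^n W(s)`. -/
structure LameWangerin (J : JacobiData) where
  W : ℝ → ℝ → ℕ → ℂ → ℂ
  Wd : ℝ → ℝ → ℕ → ℂ → ℂ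
  lam : ℝ → ℝ → ℕ → ℝ
  hasDerivAt_W : ∀ k : ℝ, 0 < k → k < 1 → ∀ ν : ℝ, -(1/2) ≤ ν → ∀ n : ℕ,
    ∀ z ∈ J.lwDomain k, HasDerivAt (W k ν n) (Wd k ν n z) z
  hasDerivAt_Wd : ∀ k : ℝ, 0 < k → k < 1 → ∀ ν : ℝ, -(1/2) ≤ ν → ∀ n : ℕ,
    ∀ z ∈ J.lwDomain k, HasDerivAt (Wd k ν n)
      (-((lam k ν n : ℂ) - (ν : ℂ) * ((ν : ℂ) + 1) * (J.dn k z / J.cn k z) ^ 2) * W k ν n z) z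
  real_W : ∀ k : ℝ, 0 < k → k < 1 → ∀ ν : ℝ, -(1/2) ≤ ν → ∀ n : ℕ, ∀ x : ℝ,
    -J.K k < x → x < J.K k → (W k ν n (x : ℂ)).im = 0
  normalized : ∀ k : ℝ, 0 < k → k < 1 → ∀ ν : ℝ, -(1/2) ≤ ν → ∀ n : ℕ,
    ∫ x in (-J.K k)..(J.K k), ‖W k ν n (x : ℂ)‖ ^ 2 = 1
  zeros_finite : ∀ k : ℝ, 0 < k → k < 1 → ∀ ν : ℝ, -(1/2) ≤ ν → ∀ n : ℕ,
    Set.Finite {x : ℝ | x ∈ Set.Ioo (-J.K k) (J.K k) ∧ W k ν n (x : ℂ) = 0}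
  card_zeros : ∀ k : ℝ, 0 < k → k < 1 → ∀ ν : ℝ, -(1/2) ≤ ν → ∀ n : ℕ,
    Set.ncard {x : ℝ | x ∈ Set.Ioo (-J.K k) (J.K k) ∧ W k ν n (x : ℂ) = 0} = n
  exponent_right : ∀ k : ℝ, 0 < k → k < 1 → ∀ ν : ℝ, -(1/2) ≤ ν → ∀ n : ℕ,
    ∃ c : ℂ, c ≠ 0 ∧ Filter.Tendsto
      (fun x : ℝ => W k ν n (x : ℂ) / ((J.K k - x : ℝ) : ℂ) ^ ((ν : ℂ) + 1))
      (nhdsWithin (J.K k) (Set.Iio (J.K k))) (nhds c)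
  exponent_left : ∀ k : ℝ, 0 < k → k < 1 → ∀ ν : ℝ, -(1/2) ≤ ν → ∀ n : ℕ,
    ∃ c : ℂ, c ≠ 0 ∧ Filter.Tendsto
      (fun x : ℝ => W k ν n (x : ℂ) / ((x + J.K k : ℝ) : ℂ) ^ ((ν : ℂ) + 1))
      (nhdsWithin (-J.K k) (Set.Ioi (-J.K k))) (nhds c)
  parity : ∀ k : ℝ, 0 < k → k < 1 → ∀ ν : ℝ, -(1/2) ≤ ν → ∀ n : ℕ,
    ∀ z ∈ J.lwDomain k, W k ν n (-z) = (-1) ^ n * W k ν n z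

/-- The degree `ν = |m| - 1/2` associated with the azimuthal index `m ∈ ℤ`. -/
def nuIdx (m : ℤ) : ℝ := (m.natAbs : ℝ) - 1/2

namespace LameWangerin

variable {J : JacobiData} (L : LameWangerin J)

/-- The internal bi-cyclide harmonic of the first kind `G_{m,n}` expressed in bi-cyclide
coordinates: `R^{-1/2} W^n_{|m|-1/2}(s,k) W^n_{|m|-1/2}(it-K-iK',k) e^{imφ}`. -/
def Gval (k : ℝ) (m : ℤ) (n : ℕ) (s t φ : ℝ) : ℂ :=
  ((J.RR k s t ^ (-(1/2) : ℝ) : ℝ) : ℂ) * L.W k (nuIdx m) n (s : ℂ) *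
    L.W k (nuIdx m) n (Complex.I * (t : ℂ) - (J.K k : ℂ) - Complex.I * (J.Kc k : ℂ)) *
    Complex.exp ((m : ℂ) * Complex.I * (φ : ℂ))

/-- The external bi-cyclide harmonic of the first kind `H_{m,n}` expressed in bi-cyclide
coordinates: `R^{-1/2} W^n_{|m|-1/2}(s,k) W^n_{|m|-1/2}(-it-K-iK',k) e^{imφ}`. -/
def Hval (k : ℝ) (m : ℤ) (n : ℕ) (s t φ : ℝ) : ℂ :=
  ((J.RR k s t ^ (-(1/2) : ℝ) : ℝ) : ℂ) * L.W k (nuIdx m) n (s : ℂ) *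
    L.W k (nuIdx m) n (-Complex.I * (t : ℂ) - (J.K k : ℂ) - Complex.I * (J.Kc k : ℂ)) *
    Complex.exp ((m : ℂ) * Complex.I * (φ : ℂ))

/-- The (constant) Wronskian `w_{m,n} = U(t)V'(t) - U'(t)V(t)` of
`U(t) = W^n_{|m|-1/2}(it-K-iK',k)` and `V(t) = U(-t)`, evaluated at `t = 0`,
where it equals `-2 U(0) U'(0) = -2i W(-K-iK') W'(-K-iK')`. -/
def wronsk1 (k : ℝ) (m : ℤ) (n : ℕ) : ℂ :=
  -2 * Complex.I * L.W k (nuIdx m) n (-(J.K k : ℂ) - Complex.I * (J.Kc k : ℂ)) *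
    L.Wd k (nuIdx m) n (-(J.K k : ℂ) - Complex.I * (J.Kc k : ℂ))

/-- The internal bi-cyclide harmonic of the second kind expressed in bi-cyclide
coordinates: `R^{-1/2} W^n_{|m|-1/2}(-is-K'-iK,k') W^n_{|m|-1/2}(t,k') e^{imφ}`. -/
def G2val (k : ℝ) (m : ℤ) (n : ℕ) (s t φ : ℝ) : ℂ :=
  ((J.RR k s t ^ (-(1/2) : ℝ) : ℝ) : ℂ) *
    L.W (complMod k) (nuIdx m) n
      (-Complex.I * (s : ℂ) - (J.Kc k : ℂ) - Complex.I * (J.K k : ℂ)) *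
    L.W (complMod k) (nuIdx m) n (t : ℂ) * Complex.exp ((m : ℂ) * Complex.I * (φ : ℂ))

/-- The external bi-cyclide harmonic of the second kind expressed in bi-cyclide
coordinates: `R^{-1/2} W^n_{|m|-1/2}(is-K'-iK,k') W^n_{|m|-1/2}(t,k') e^{imφ}`. -/
def H2val (k : ℝ) (m : ℤ) (n : ℕ) (s t φ : ℝ) : ℂ :=
  ((J.RR k s t ^ (-(1/2) : ℝ) : ℝ) : ℂ) *
    L.W (complMod k) (nuIdx m) n
      (Complex.I * (s : ℂ) - (J.Kc k : ℂ) - Complex.I * (J.K k : ℂ)) *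
    L.W (complMod k) (nuIdx m) n (t : ℂ) * Complex.exp ((m : ℂ) * Complex.I * (φ : ℂ))

/-- The (constant) Wronskian `w_{m,n} = U(s)V'(s) - U'(s)V(s)` of
`U(s) = W^n_{|m|-1/2}(is-K'-iK,k')` and `V(s) = U(-s)`, evaluated at `s = 0`. -/
def wronsk2 (k : ℝ) (m : ℤ) (n : ℕ) : ℂ :=
  -2 * Complex.I *
    L.W (complMod k) (nuIdx m) n (-(J.Kc k : ℂ) - Complex.I * (J.K k : ℂ)) *
    L.Wd (complMod k) (nuIdx m) n (-(J.Kc k : ℂ) - Complex.I * (J.K k : ℂ))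

end LameWangerin

/-- `b = (1-k)/k' = k'/(1+k) ∈ (0,1)`. -/
def bParam (k : ℝ) : ℝ := (1 - k) / complMod k

/-- The exceptional segment `{(0,0,z) : -1/b ≤ z ≤ -b}` of the internal harmonics
of the first kind. -/
def segG (k : ℝ) : Set E3 :=
  {p : E3 | p 0 = 0 ∧ p 1 = 0 ∧ -(bParam k)⁻¹ ≤ p 2 ∧ p 2 ≤ -bParam k}

/-- The exceptional segment `{(0,0,z) : b ≤ z ≤ 1/b}` of the external harmonics
of the first kind. -/
def segH (k : ℝ) : Set E3 :=
  {p : E3 | p 0 = 0 ∧ p 1 = 0 ∧ bParam k ≤ p 2 ∧ p 2 ≤ (bParam k)⁻¹}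

/-- The exceptional set `{(0,0,z) : |z| ≥ 1/b}` of the internal harmonics
of the second kind. -/
def segG2 (k : ℝ) : Set E3 :=
  {p : E3 | p 0 = 0 ∧ p 1 = 0 ∧ (bParam k)⁻¹ ≤ |p 2|}

/-- The quantity `χ(s,t,s*,t*,k)` of the addition theorem. -/
def JacobiData.chiB (J : JacobiData) (k s t s' t' : ℝ) : ℝ :=
  J.ncr k s * J.ncr (complMod k) t * J.ncr k s' * J.ncr (complMod k) t' -
    J.dcr k s * J.scr (complMod k) t * J.dcr k s' * J.scr (complMod k) t' -
    J.scr k s * J.dcr (complMod k) t * J.scr k s' * J.dcr (complMod k) t'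

/-- The polynomial `P₁(x,y,z)` whose zero set (in `z > 0`) is the coordinate surface
`t = t₀`. -/
def JacobiData.P1 (J : JacobiData) (k t₀ : ℝ) (p : E3) : ℝ :=
  (J.snr (complMod k) t₀) ^ 2 * (p 0 ^ 2 + p 1 ^ 2 + p 2 ^ 2 + 1) ^ 2 -
    k ^ 2 * (J.snr (complMod k) t₀ / J.dnr (complMod k) t₀) ^ 2 *
      (p 0 ^ 2 + p 1 ^ 2 + p 2 ^ 2 - 1) ^ 2 - 4 * p 2 ^ 2

/-- The bounded domain `D₁` interior to the coordinate surface `t = t₀`, given in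
Cartesian coordinates by `P₁ < 0`, `z > 0` and in bi-cyclide coordinates by
`t ∈ (t₀, K']`. -/
def JacobiData.D1 (J : JacobiData) (k t₀ : ℝ) : Set E3 :=
  {p : E3 | J.P1 k t₀ p < 0 ∧ 0 < p 2}

/-- The Legendre function of the second kind `Q_ν(x)` for `x > 1` (Heine's integral
representation). -/
def legendreQ (ν : ℝ) (x : ℝ) : ℝ :=
  ∫ t in Set.Ioi (0 : ℝ), (x + Real.sqrt (x ^ 2 - 1) * Real.cosh t) ^ (-ν - 1)

/-- The Legendre polynomial `P_ℓ(x)` (Rodrigues' formula). -/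
def legendreP (ℓ : ℕ) (x : ℝ) : ℝ :=
  (1 / (2 ^ ℓ * (Nat.factorial ℓ : ℝ))) * deriv^[ℓ] (fun y : ℝ => (y ^ 2 - 1) ^ ℓ) x

/-- The Ferrers function of the first kind `𝖯^m_ℓ(x)`, `-1 < x < 1`. -/
def ferrersP (ℓ m : ℕ) (x : ℝ) : ℝ :=
  (1 - x ^ 2) ^ ((m : ℝ) / 2) * deriv^[m] (legendreP ℓ) x

/-- The associated Legendre function of the first kind `P^m_ℓ(x)`, `x > 1`. -/
def assocP (ℓ m : ℕ) (x : ℝ) : ℝ :=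
  (x ^ 2 - 1) ^ ((m : ℝ) / 2) * deriv^[m] (legendreP ℓ) x

/-- The associated Legendre function of the second kind `Q^m_ℓ(x)`, `x > 1`. -/
def assocQ (ℓ m : ℕ) (x : ℝ) : ℝ :=
  (x ^ 2 - 1) ^ ((m : ℝ) / 2) * deriv^[m] (legendreQ (ℓ : ℝ)) x

/-- The associated Legendre function of the second kind `Q^μ_λ(z)` of general real order
`μ` and degree `λ`, for complex argument `z` off the cut `(-∞, 1]`, via the integral
representation `Q^μ_λ(z) = e^{iμπ} (Γ(λ+1)/Γ(λ-μ+1)) ∫_0^∞ cosh(μt) (z + √(z²-1) cosh t)^{-λ-1} dt`. -/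
def legendreQC (μ lam : ℝ) (z : ℂ) : ℂ :=
  Complex.exp ((μ : ℂ) * (Real.pi : ℂ) * Complex.I) *
    (Complex.Gamma ((lam : ℂ) + 1) / Complex.Gamma ((lam : ℂ) - (μ : ℂ) + 1)) *
    ∫ t in Set.Ioi (0 : ℝ), ((Real.cosh (μ * t) : ℝ) : ℂ) *
      (z + (z - 1) ^ ((1 : ℂ) / 2) * (z + 1) ^ ((1 : ℂ) / 2) * ((Real.cosh t : ℝ) : ℂ)) ^
        (-(lam : ℂ) - 1)


/-! ### Auxiliary development -/

section Aux

lemma complMod_sq {k : ℝ} (hk0 : 0 < k) (hk1 : k < 1) : complMod k ^ 2 = 1 - k ^ 2 :=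
  Real.sq_sqrt (by nlinarith)

lemma complMod_pos {k : ℝ} (hk0 : 0 < k) (hk1 : k < 1) : 0 < complMod k :=
  Real.sqrt_pos.mpr (by nlinarith)

lemma complMod_lt_one {k : ℝ} (hk0 : 0 < k) (hk1 : k < 1) : complMod k < 1 := by
  have h := complMod_sq hk0 hk1
  have h2 := complMod_pos hk0 hk1
  nlinarith

lemma complMod_complMod {k : ℝ} (hk0 : 0 < k) (hk1 : k < 1) :
    complMod (complMod k) = k := by
  rw [complMod, complMod_sq hk0 hk1]
  simp only [sub_sub_cancel]
  exact Real.sqrt_sq hk0.le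

namespace JacobiData

variable (J : JacobiData) {k : ℝ}

lemma Kc_pos (hk0 : 0 < k) (hk1 : k < 1) : 0 < J.Kc k :=
  J.K_pos _ (complMod_pos hk0 hk1) (complMod_lt_one hk0 hk1)

lemma im_lt_Kc (hk0 : 0 < k) (hk1 : k < 1) (x : ℝ) : |((x : ℂ)).im| < J.K (complMod k) := by
  simpa [Kc] using J.Kc_pos hk0 hk1

lemma hasDerivAt_snr (hk0 : 0 < k) (hk1 : k < 1) (x : ℝ) :
    HasDerivAt (J.snr k) (J.cnr k x * J.dnr k x) x := by
  have h := (J.sn_hasDerivAt k hk0 hk1 (x : ℂ) (J.im_lt_Kc hk0 hk1 x)).real_of_complex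
  have : (J.cn k (x : ℂ) * J.dn k (x : ℂ)).re = J.cnr k x * J.dnr k x := by
    rw [Complex.mul_re, J.cn_real k hk0 hk1 x, J.dn_real k hk0 hk1 x]
    simp only [zero_mul, mul_zero, sub_zero]
    rfl
  rwa [this] at h

lemma hasDerivAt_cnr (hk0 : 0 < k) (hk1 : k < 1) (x : ℝ) :
    HasDerivAt (J.cnr k) (-(J.snr k x) * J.dnr k x) x := by
  have h := (J.cn_hasDerivAt k hk0 hk1 (x : ℂ) (J.im_lt_Kc hk0 hk1 x)).real_of_complex
  have : (-(J.sn k (x : ℂ)) * J.dn k (x : ℂ)).re = -(J.snr k x) * J.dnr k x := by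
    simp only [Complex.mul_re, Complex.neg_re, Complex.neg_im,
      J.sn_real k hk0 hk1 x, J.dn_real k hk0 hk1 x, neg_zero, mul_zero, sub_zero]
    rfl
  rwa [this] at h

lemma hasDerivAt_dnr (hk0 : 0 < k) (hk1 : k < 1) (x : ℝ) :
    HasDerivAt (J.dnr k) (-k ^ 2 * J.snr k x * J.cnr k x) x := by
  have h := (J.dn_hasDerivAt k hk0 hk1 (x : ℂ) (J.im_lt_Kc hk0 hk1 x)).real_of_complex
  have hcast : -(k : ℂ) ^ 2 * J.sn k (x : ℂ) * J.cn k (x : ℂ)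
      = (((-k ^ 2 : ℝ)) : ℂ) * J.sn k (x : ℂ) * J.cn k (x : ℂ) := by push_cast; ring
  have : (-(k : ℂ) ^ 2 * J.sn k (x : ℂ) * J.cn k (x : ℂ)).re
      = -k ^ 2 * J.snr k x * J.cnr k x := by
    rw [hcast]
    simp only [Complex.mul_re, Complex.mul_im, Complex.ofReal_re, Complex.ofReal_im,
      J.sn_real k hk0 hk1 x, J.cn_real k hk0 hk1 x, zero_mul, mul_zero, sub_zero, add_zero]
    rfl
  rwa [this] at h

lemma snr_zero : J.snr k 0 = 0 := by
  simp [snr, show ((0 : ℝ) : ℂ) = 0 from rfl, J.sn_zero]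

lemma cnr_zero : J.cnr k 0 = 1 := by
  simp [cnr, show ((0 : ℝ) : ℂ) = 0 from rfl, J.cn_zero]

lemma dnr_zero : J.dnr k 0 = 1 := by
  simp [dnr, show ((0 : ℝ) : ℂ) = 0 from rfl, J.dn_zero]

lemma snr_sq_add_cnr_sq (hk0 : 0 < k) (hk1 : k < 1) (x : ℝ) : J.snr k x ^ 2 + J.cnr k x ^ 2 = 1 := by
  have hd : ∀ y : ℝ, HasDerivAt (fun y => J.snr k y ^ 2 + J.cnr k y ^ 2) 0 y := by
    intro y
    have h := (((J.hasDerivAt_snr hk0 hk1 y).pow 2).add ((J.hasDerivAt_cnr hk0 hk1 y).pow 2))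
    exact h.congr_deriv (by ring)
  have hc : ∀ x y : ℝ, (fun y => J.snr k y ^ 2 + J.cnr k y ^ 2) x
      = (fun y => J.snr k y ^ 2 + J.cnr k y ^ 2) y :=
    is_const_of_deriv_eq_zero (fun y => (hd y).differentiableAt)
      (fun y => (hd y).deriv)
  have h0 := hc x 0
  simp only [J.snr_zero, J.cnr_zero] at h0
  simpa using h0

lemma dnr_sq (hk0 : 0 < k) (hk1 : k < 1) (x : ℝ) : J.dnr k x ^ 2 + k ^ 2 * J.snr k x ^ 2 = 1 := by
  have hd : ∀ y : ℝ, HasDerivAt (fun y => J.dnr k y ^ 2 + k ^ 2 * J.snr k y ^ 2) 0 y := by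
    intro y
    have h := ((J.hasDerivAt_dnr hk0 hk1 y).pow 2).add
      (((J.hasDerivAt_snr hk0 hk1 y).pow 2).const_mul (k ^ 2))
    exact h.congr_deriv (by ring)
  have hc : ∀ x y : ℝ, (fun y => J.dnr k y ^ 2 + k ^ 2 * J.snr k y ^ 2) x
      = (fun y => J.dnr k y ^ 2 + k ^ 2 * J.snr k y ^ 2) y :=
    is_const_of_deriv_eq_zero (fun y => (hd y).differentiableAt)
      (fun y => (hd y).deriv)
  have h0 := hc x 0
  simp only [J.snr_zero, J.dnr_zero] at h0
  simpa using h0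

end JacobiData

end Aux


section Aux2

private lemma mul_diff_bound {a b a' b' D : ℝ} (ha : |a| ≤ 1) (hb' : |b'| ≤ 1)
    (h1 : |a - a'| ≤ D) (h2 : |b - b'| ≤ D) : |a * b - a' * b'| ≤ 2 * D := by
  have he : a * b - a' * b' = a * (b - b') + b' * (a - a') := by ring
  rw [he]
  calc |a * (b - b') + b' * (a - a')| ≤ |a * (b - b')| + |b' * (a - a')| := abs_add_le _ _
    _ = |a| * |b - b'| + |b'| * |a - a'| := by rw [abs_mul, abs_mul]
    _ ≤ 2 * D := by nlinarith [abs_nonneg (a - a'), abs_nonneg (b - b'), abs_nonneg a, abs_nonneg b']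

namespace JacobiData

variable (J : JacobiData) {k : ℝ}

lemma abs_snr_le (hk0 : 0 < k) (hk1 : k < 1) (x : ℝ) : |J.snr k x| ≤ 1 := by
  have h := J.snr_sq_add_cnr_sq hk0 hk1 x
  exact abs_le.mpr ⟨by nlinarith [sq_nonneg (J.cnr k x)], by nlinarith [sq_nonneg (J.cnr k x)]⟩

lemma abs_cnr_le (hk0 : 0 < k) (hk1 : k < 1) (x : ℝ) : |J.cnr k x| ≤ 1 := by
  have h := J.snr_sq_add_cnr_sq hk0 hk1 x
  exact abs_le.mpr ⟨by nlinarith [sq_nonneg (J.snr k x)], by nlinarith [sq_nonneg (J.snr k x)]⟩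

lemma abs_dnr_le (hk0 : 0 < k) (hk1 : k < 1) (x : ℝ) : |J.dnr k x| ≤ 1 := by
  have h := J.dnr_sq hk0 hk1 x
  have h2 := sq_nonneg (J.snr k x)
  exact abs_le.mpr ⟨by nlinarith, by nlinarith⟩

lemma parity_all (hk0 : 0 < k) (hk1 : k < 1) (x : ℝ) :
    J.snr k (-x) = -J.snr k x ∧ J.cnr k (-x) = J.cnr k x ∧ J.dnr k (-x) = J.dnr k x := by
  set v : ℝ → ℝ × ℝ × ℝ → ℝ × ℝ × ℝ :=
    fun _ p => (p.2.1 * p.2.2, -p.1 * p.2.2, -k ^ 2 * p.1 * p.2.1) with hv_def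
  set S : ℝ → Set (ℝ × ℝ × ℝ) :=
    fun _ => {p : ℝ × ℝ × ℝ | |p.1| ≤ 1 ∧ |p.2.1| ≤ 1 ∧ |p.2.2| ≤ 1} with hS_def
  have hk2 : k ^ 2 ≤ 1 := by nlinarith
  have hv : ∀ t : ℝ, LipschitzOnWith (3 : NNReal) (v t) (S t) := by
    intro t
    rw [lipschitzOnWith_iff_dist_le_mul]
    intro p hp q hq
    obtain ⟨hp1, hp2, hp3⟩ := hp
    obtain ⟨hq1, hq2, hq3⟩ := hq
    have hD0 : (0 : ℝ) ≤ dist p q := dist_nonneg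
    have h1 : |p.1 - q.1| ≤ dist p q := by
      rw [← Real.dist_eq]
      exact le_max_left (dist p.1 q.1) (dist p.2 q.2)
    have h2 : |p.2.1 - q.2.1| ≤ dist p q := by
      rw [← Real.dist_eq]
      exact le_trans (le_max_left (dist p.2.1 q.2.1) (dist p.2.2 q.2.2))
        (le_max_right (dist p.1 q.1) (dist p.2 q.2))
    have h3 : |p.2.2 - q.2.2| ≤ dist p q := by
      rw [← Real.dist_eq]
      exact le_trans (le_max_right (dist p.2.1 q.2.1) (dist p.2.2 q.2.2))
        (le_max_right (dist p.1 q.1) (dist p.2 q.2))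
    have c1 : |p.2.1 * p.2.2 - q.2.1 * q.2.2| ≤ 2 * dist p q :=
      mul_diff_bound hp2 hq3 h2 h3
    have c2 : |(-p.1 * p.2.2) - (-q.1 * q.2.2)| ≤ 2 * dist p q := by
      have h1' : |(-p.1) - (-q.1)| ≤ dist p q := by
        rw [show (-p.1) - (-q.1) = -(p.1 - q.1) by ring, abs_neg]; exact h1
      exact mul_diff_bound (by simpa using hp1) hq3 h1' h3
    have c3 : |(-k ^ 2 * p.1 * p.2.1) - (-k ^ 2 * q.1 * q.2.1)| ≤ 2 * dist p q := by
      have hb : |p.1 * p.2.1 - q.1 * q.2.1| ≤ 2 * dist p q := mul_diff_bound hp1 hq2 h1 h2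
      have he : -k ^ 2 * p.1 * p.2.1 - -k ^ 2 * q.1 * q.2.1
          = (-k ^ 2) * (p.1 * p.2.1 - q.1 * q.2.1) := by ring
      rw [he, abs_mul, abs_neg, _root_.abs_of_nonneg (sq_nonneg k)]
      nlinarith [abs_nonneg (p.1 * p.2.1 - q.1 * q.2.1)]
    have h33 : ((3 : NNReal) : ℝ) * dist p q = 3 * dist p q := by norm_num
    rw [h33, Prod.dist_eq, Prod.dist_eq]
    simp only [hv_def, Real.dist_eq]
    exact max_le (by linarith) (max_le (by linarith) (by linarith))
  have hmemf : ∀ y : ℝ, (J.snr k y, J.cnr k y, J.dnr k y) ∈ S y := fun y =>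
    ⟨J.abs_snr_le hk0 hk1 y, J.abs_cnr_le hk0 hk1 y, J.abs_dnr_le hk0 hk1 y⟩
  have key : Set.EqOn (fun y : ℝ => (J.snr k y, J.cnr k y, J.dnr k y))
      (fun y : ℝ => (-J.snr k (-y), J.cnr k (-y), J.dnr k (-y)))
      (Set.Ioo (-(|x| + 1)) (|x| + 1)) := by
    apply ODE_solution_unique_of_mem_Ioo (fun t _ => hv t)
      (t₀ := 0) (Set.mem_Ioo.mpr ⟨by nlinarith [abs_nonneg x], by nlinarith [abs_nonneg x]⟩)
    · intro y _
      refine ⟨?_, hmemf y⟩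
      exact (J.hasDerivAt_snr hk0 hk1 y).prodMk
        ((J.hasDerivAt_cnr hk0 hk1 y).prodMk (J.hasDerivAt_dnr hk0 hk1 y))
    · intro y _
      constructor
      · have d1 : HasDerivAt (fun y : ℝ => -J.snr k (-y))
            (J.cnr k (-y) * J.dnr k (-y)) y := by
          have := ((J.hasDerivAt_snr hk0 hk1 (-y)).comp y (hasDerivAt_neg y)).neg
          exact this.congr_deriv (by ring)
        have d2 : HasDerivAt (fun y : ℝ => J.cnr k (-y))
            (-(-J.snr k (-y)) * J.dnr k (-y)) y := by
          have := (J.hasDerivAt_cnr hk0 hk1 (-y)).comp y (hasDerivAt_neg y)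
          exact this.congr_deriv (by ring)
        have d3 : HasDerivAt (fun y : ℝ => J.dnr k (-y))
            (-k ^ 2 * -J.snr k (-y) * J.cnr k (-y)) y := by
          have := (J.hasDerivAt_dnr hk0 hk1 (-y)).comp y (hasDerivAt_neg y)
          exact this.congr_deriv (by ring)
        exact d1.prodMk (d2.prodMk d3)
      · exact ⟨by simpa using J.abs_snr_le hk0 hk1 (-y), J.abs_cnr_le hk0 hk1 (-y),
          J.abs_dnr_le hk0 hk1 (-y)⟩
    · simp [J.snr_zero, J.cnr_zero, J.dnr_zero]
  have hx : x ∈ Set.Ioo (-(|x| + 1)) (|x| + 1) := by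
    constructor
    · nlinarith [abs_nonneg x, neg_abs_le x]
    · nlinarith [le_abs_self x]
  have := key hx
  simp only [Prod.mk.injEq] at this
  exact ⟨by linarith [this.1], (this.2.1).symm, (this.2.2).symm⟩

lemma snr_neg (hk0 : 0 < k) (hk1 : k < 1) (x : ℝ) : J.snr k (-x) = -J.snr k x :=
  (J.parity_all hk0 hk1 x).1

lemma cnr_neg (hk0 : 0 < k) (hk1 : k < 1) (x : ℝ) : J.cnr k (-x) = J.cnr k x :=
  (J.parity_all hk0 hk1 x).2.1

lemma dnr_neg (hk0 : 0 < k) (hk1 : k < 1) (x : ℝ) : J.dnr k (-x) = J.dnr k x :=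
  (J.parity_all hk0 hk1 x).2.2

lemma cnr_pos (hk0 : 0 < k) (hk1 : k < 1) {x : ℝ}
    (hx : x ∈ Set.Ioo (-J.K k) (J.K k)) : 0 < J.cnr k x := by
  rcases le_or_gt 0 x with h | h
  · exact J.cn_pos k hk0 hk1 x h hx.2
  · have heq := J.cnr_neg hk0 hk1 (-x)
    rw [neg_neg] at heq
    rw [heq]
    exact J.cn_pos k hk0 hk1 (-x) (by linarith) (by have := hx.1; linarith)

lemma dnr_pos (hk0 : 0 < k) (hk1 : k < 1) (x : ℝ) : 0 < J.dnr k x := by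
  have hne : ∀ y : ℝ, J.dnr k y ≠ 0 := by
    intro y h0
    have h := J.dnr_sq hk0 hk1 y
    have h2 := J.abs_snr_le hk0 hk1 y
    have h3 : J.snr k y ^ 2 ≤ 1 := by
      have := abs_le.mp h2
      nlinarith [this.1, this.2]
    rw [h0] at h
    nlinarith
  by_contra hle
  push_neg at hle
  have hdiff : Differentiable ℝ (J.dnr k) :=
    fun y => (J.hasDerivAt_dnr hk0 hk1 y).differentiableAt
  have hcont : Continuous (J.dnr k) := hdiff.continuous
  have h01 : (0 : ℝ) ∈ Set.uIcc (J.dnr k x) (J.dnr k 0) := by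
    rw [J.dnr_zero]
    exact Set.mem_uIcc.mpr (Or.inl ⟨hle, by norm_num⟩)
  obtain ⟨y, _, hy⟩ := intermediate_value_uIcc (hcont.continuousOn (s := Set.uIcc x 0)) h01
  exact hne y hy

lemma snr_strictMonoOn (hk0 : 0 < k) (hk1 : k < 1) :
    StrictMonoOn (J.snr k) (Set.Icc (-J.K k) (J.K k)) := by
  apply strictMonoOn_of_deriv_pos (convex_Icc _ _)
  · have hdiff : Differentiable ℝ (J.snr k) :=
      fun y => (J.hasDerivAt_snr hk0 hk1 y).differentiableAt
    exact hdiff.continuous.continuousOn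
  · intro x hx
    rw [interior_Icc] at hx
    rw [(J.hasDerivAt_snr hk0 hk1 x).deriv]
    exact mul_pos (J.cnr_pos hk0 hk1 hx) (J.dnr_pos hk0 hk1 x)

end JacobiData

end Aux2


section Aux3

lemma norm_sq_E3 (p : E3) : ‖p‖ ^ 2 = p 0 ^ 2 + p 1 ^ 2 + p 2 ^ 2 := by
  rw [EuclideanSpace.norm_eq]
  rw [Real.sq_sqrt (by positivity)]
  rw [Fin.sum_univ_three]
  simp [Real.norm_eq_abs, sq_abs]

namespace JacobiData

variable (J : JacobiData) {k : ℝ}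

set_option maxHeartbeats 1000000 in
/-- Collected facts about a bi-cyclide coordinate triple. -/
lemma bicyclide_keys (hk0 : 0 < k) (hk1 : k < 1) {p : E3} {s t φ : ℝ}
    (h : J.IsBicyclide k p s t φ) :
    0 < J.cnr k s ∧ 0 < J.dnr k s ∧ 0 < J.cnr (complMod k) t ∧ 0 < J.dnr (complMod k) t ∧
    J.snr k s ^ 2 < 1 ∧ k ^ 2 < J.dnr (complMod k) t ^ 2 ∧ J.dnr (complMod k) t ≤ 1 ∧
    J.snr k s * J.dnr (complMod k) t < 1 ∧ -1 < J.snr k s * J.dnr (complMod k) t ∧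
    p 2 * (1 - J.snr k s * J.dnr (complMod k) t) = J.dnr k s * J.snr (complMod k) t ∧
    (p 0 ^ 2 + p 1 ^ 2) * (1 - J.snr k s * J.dnr (complMod k) t) ^ 2 =
      (J.cnr k s * J.cnr (complMod k) t) ^ 2 ∧
    (p 0 ^ 2 + p 1 ^ 2 + p 2 ^ 2) * (1 - J.snr k s * J.dnr (complMod k) t) =
      1 + J.snr k s * J.dnr (complMod k) t := by
  obtain ⟨hs, ht, hφ, hp0, hp1, hp2⟩ := h
  have hκ0 : 0 < complMod k := complMod_pos hk0 hk1
  have hκ1 : complMod k < 1 := complMod_lt_one hk0 hk1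
  have hκsq : complMod k ^ 2 = 1 - k ^ 2 := complMod_sq hk0 hk1
  set κ := complMod k
  set a := J.snr k s with ha
  set c := J.cnr k s with hc
  set d0 := J.dnr k s with hd0
  set a' := J.snr κ t with ha'
  set c' := J.cnr κ t with hc'
  set d' := J.dnr κ t with hd'
  have F1 : a ^ 2 + c ^ 2 = 1 := J.snr_sq_add_cnr_sq hk0 hk1 s
  have F2 : d0 ^ 2 + k ^ 2 * a ^ 2 = 1 := J.dnr_sq hk0 hk1 s
  have F3 : a' ^ 2 + c' ^ 2 = 1 := J.snr_sq_add_cnr_sq hκ0 hκ1 t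
  have F4 : d' ^ 2 + κ ^ 2 * a' ^ 2 = 1 := J.dnr_sq hκ0 hκ1 t
  have P1 : 0 < c := J.cnr_pos hk0 hk1 hs
  have P2 : 0 < d0 := J.dnr_pos hk0 hk1 s
  have P3 : 0 < c' := J.cnr_pos hκ0 hκ1 ht
  have P4 : 0 < d' := J.dnr_pos hκ0 hκ1 t
  have P6 : a ^ 2 < 1 := by nlinarith only [F1, mul_pos P1 P1]
  have P7 : a' ^ 2 < 1 := by nlinarith only [F3, mul_pos P3 P3]
  have h1k : (0 : ℝ) < 1 - k ^ 2 := by nlinarith only [hk0, hk1]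
  have h1a : (0 : ℝ) < 1 - a' ^ 2 := by linarith
  have hd2 : d' ^ 2 = 1 - (1 - k ^ 2) * a' ^ 2 := by
    linear_combination F4 - a' ^ 2 * hκsq
  have P5 : k ^ 2 < d' ^ 2 := by nlinarith only [hd2, mul_pos h1k h1a]
  have hd2le : d' ^ 2 ≤ 1 := by nlinarith only [F4, sq_nonneg (κ * a')]
  have P8 : d' ≤ 1 := by nlinarith only [hd2le, P4]
  have U0 : (a * d') ^ 2 < 1 := by
    nlinarith only [P6, hd2le, mul_le_mul_of_nonneg_left hd2le (sq_nonneg a), sq_nonneg a]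
  have U1 : a * d' < 1 := by nlinarith only [U0, sq_nonneg (1 - a * d')]
  have U2 : -1 < a * d' := by nlinarith only [U0, sq_nonneg (1 + a * d')]
  have hq : (0 : ℝ) < 1 - a * d' := by linarith
  have hqne : (1 - a * d') ≠ 0 := ne_of_gt hq
  have E2 : p 2 * (1 - a * d') = d0 * a' := by
    rw [hp2, ZZ]
    exact div_mul_cancel₀ _ hqne
  have hRRval : J.RR k s t * (1 - a * d') = c * c' := by
    rw [RR]
    exact div_mul_cancel₀ _ hqne
  have hcs := Real.sin_sq_add_cos_sq φ
  have E1 : (p 0 ^ 2 + p 1 ^ 2) * (1 - a * d') ^ 2 = (c * c') ^ 2 := by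
    rw [hp0, hp1]
    linear_combination (J.RR k s t ^ 2 * (1 - a * d') ^ 2) * hcs
      + (J.RR k s t * (1 - a * d') + c * c') * hRRval
  have hc2 : c ^ 2 = 1 - a ^ 2 := by linarith
  have hc2' : c' ^ 2 = 1 - a' ^ 2 := by linarith
  have hd02 : d0 ^ 2 = 1 - k ^ 2 * a ^ 2 := by linarith
  have E3 : (p 0 ^ 2 + p 1 ^ 2 + p 2 ^ 2) * (1 - a * d') = 1 + a * d' := by
    have h2 : p 2 ^ 2 * (1 - a * d') ^ 2 = (d0 * a') ^ 2 := by
      linear_combination (p 2 * (1 - a * d') + d0 * a') * E2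
    have hsum : (p 0 ^ 2 + p 1 ^ 2 + p 2 ^ 2) * (1 - a * d') ^ 2
        = (c * c') ^ 2 + (d0 * a') ^ 2 := by linear_combination E1 + h2
    have hid : (c * c') ^ 2 + (d0 * a') ^ 2 = (1 + a * d') * (1 - a * d') := by
      linear_combination c' ^ 2 * hc2 + (1 - a ^ 2) * hc2' + a' ^ 2 * hd02 + a ^ 2 * hd2
    have hfin : ((p 0 ^ 2 + p 1 ^ 2 + p 2 ^ 2) * (1 - a * d')) * (1 - a * d')
        = (1 + a * d') * (1 - a * d') := by linear_combination hsum + hid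
    exact mul_right_cancel₀ hqne hfin
  exact ⟨P1, P2, P3, P4, P6, P5, P8, U1, U2, E2, E1, E3⟩

set_option maxHeartbeats 1000000 in
/-- Uniqueness of bi-cyclide coordinates. -/
lemma bicyclide_unique (hk0 : 0 < k) (hk1 : k < 1) {p : E3} {s t φ s' t' φ' : ℝ}
    (h : J.IsBicyclide k p s t φ) (h' : J.IsBicyclide k p s' t' φ') :
    s = s' ∧ t = t' ∧ Real.cos φ = Real.cos φ' ∧ Real.sin φ = Real.sin φ' := by
  have hκ0 : 0 < complMod k := complMod_pos hk0 hk1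
  have hκ1 : complMod k < 1 := complMod_lt_one hk0 hk1
  have hκsq : complMod k ^ 2 = 1 - k ^ 2 := complMod_sq hk0 hk1
  obtain ⟨P1, P2, P3, P4, P6, P5, P8, U1, U2, E2, E1, E3⟩ := J.bicyclide_keys hk0 hk1 h
  obtain ⟨Q1, Q2, Q3, Q4, Q6, Q5, Q8, V1, V2, G2, G1, G3⟩ := J.bicyclide_keys hk0 hk1 h'
  set κ := complMod k
  set a1 := J.snr k s
  set c1 := J.cnr k s
  set e1 := J.dnr k s
  set a1' := J.snr κ t
  set c1' := J.cnr κ t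
  set d1 := J.dnr κ t
  set a2 := J.snr k s'
  set c2 := J.cnr k s'
  set e2 := J.dnr k s'
  set a2' := J.snr κ t'
  set c2' := J.cnr κ t'
  set d2 := J.dnr κ t'
  have F1 : a1 ^ 2 + c1 ^ 2 = 1 := J.snr_sq_add_cnr_sq hk0 hk1 s
  have F2 : e1 ^ 2 + k ^ 2 * a1 ^ 2 = 1 := J.dnr_sq hk0 hk1 s
  have F4 : d1 ^ 2 + κ ^ 2 * a1' ^ 2 = 1 := J.dnr_sq hκ0 hκ1 t
  have G1b : a2 ^ 2 + c2 ^ 2 = 1 := J.snr_sq_add_cnr_sq hk0 hk1 s'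
  have G2b : e2 ^ 2 + k ^ 2 * a2 ^ 2 = 1 := J.dnr_sq hk0 hk1 s'
  have G4 : d2 ^ 2 + κ ^ 2 * a2' ^ 2 = 1 := J.dnr_sq hκ0 hκ1 t'
  have hN : (0 : ℝ) ≤ p 0 ^ 2 + p 1 ^ 2 + p 2 ^ 2 := by positivity
  -- the products a·d' agree
  have hu : a1 * d1 = a2 * d2 := by
    have key : (a1 * d1 - a2 * d2) * ((p 0 ^ 2 + p 1 ^ 2 + p 2 ^ 2) + 1) = 0 := by
      linear_combination G3 - E3
    rcases mul_eq_zero.mp key with hc | hc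
    · linarith only [hc]
    · linarith only [hc, hN]
  -- line relations
  have sq2 : (p 2 * (1 - a1 * d1)) ^ 2 = (e1 * a1') ^ 2 := by rw [E2]
  have sq2' : (p 2 * (1 - a2 * d2)) ^ 2 = (e2 * a2') ^ 2 := by rw [G2]
  have hd02_1 : e1 ^ 2 = 1 - k ^ 2 * a1 ^ 2 := by linarith
  have hd02_2 : e2 ^ 2 = 1 - k ^ 2 * a2 ^ 2 := by linarith
  have hd2_1 : d1 ^ 2 = 1 - (1 - k ^ 2) * a1' ^ 2 := by
    linear_combination F4 - a1' ^ 2 * hκsq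
  have hd2_2 : d2 ^ 2 = 1 - (1 - k ^ 2) * a2' ^ 2 := by
    linear_combination G4 - a2' ^ 2 * hκsq
  have hline1 : d1 ^ 2 + k ^ 2 * a1 ^ 2
      = 1 + k ^ 2 * (a1 * d1) ^ 2 - (1 - k ^ 2) * (p 2 * (1 - a1 * d1)) ^ 2 := by
    linear_combination (1 - k ^ 2) * sq2 + (1 - k ^ 2) * a1' ^ 2 * hd02_1
      + (1 - k ^ 2 * a1 ^ 2) * hd2_1
  have hline2 : d2 ^ 2 + k ^ 2 * a2 ^ 2
      = 1 + k ^ 2 * (a2 * d2) ^ 2 - (1 - k ^ 2) * (p 2 * (1 - a2 * d2)) ^ 2 := by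
    linear_combination (1 - k ^ 2) * sq2' + (1 - k ^ 2) * a2' ^ 2 * hd02_2
      + (1 - k ^ 2 * a2 ^ 2) * hd2_2
  have hlines : d1 ^ 2 + k ^ 2 * a1 ^ 2 = d2 ^ 2 + k ^ 2 * a2 ^ 2 := by
    rw [hline1, hline2, hu]
  have hprod : a1 ^ 2 * d1 ^ 2 = a2 ^ 2 * d2 ^ 2 := by
    linear_combination (a1 * d1 + a2 * d2) * hu
  have hfact : (a1 ^ 2 - a2 ^ 2) * (d1 ^ 2 - k ^ 2 * a2 ^ 2) = 0 := by
    linear_combination hprod - a2 ^ 2 * hlines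
  have hpos : 0 < d1 ^ 2 - k ^ 2 * a2 ^ 2 := by
    have hk2 : (0 : ℝ) < k ^ 2 := by positivity
    nlinarith only [P5, mul_pos hk2 (show (0 : ℝ) < 1 - a2 ^ 2 by linarith only [Q6])]
  have ha12 : a1 ^ 2 = a2 ^ 2 := by
    rcases mul_eq_zero.mp hfact with hc | hc
    · linarith only [hc]
    · linarith only [hc, hpos]
  have hd12 : d1 = d2 := by
    have hsq : d1 ^ 2 = d2 ^ 2 := by linear_combination hlines - k ^ 2 * ha12
    have hfac : (d1 - d2) * (d1 + d2) = 0 := by linear_combination hsq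
    rcases mul_eq_zero.mp hfac with hc | hc
    · linarith only [hc]
    · linarith only [hc, P4, Q4]
  have ha12' : a1 = a2 := by
    rw [hd12] at hu
    exact mul_right_cancel₀ (ne_of_gt Q4) hu
  have hss : s = s' := by
    have hK : 0 < J.K k := J.K_pos k hk0 hk1
    exact (J.snr_strictMonoOn hk0 hk1).injOn
      (Set.mem_Icc.mpr ⟨h.1.1.le, h.1.2.le⟩)
      (Set.mem_Icc.mpr ⟨h'.1.1.le, h'.1.2.le⟩) ha12'
  have he12 : e1 = e2 := by
    have hsq : e1 ^ 2 = e2 ^ 2 := by linear_combination F2 - G2b - k ^ 2 * ha12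
    have hfac : (e1 - e2) * (e1 + e2) = 0 := by linear_combination hsq
    rcases mul_eq_zero.mp hfac with hc | hc
    · linarith only [hc]
    · linarith only [hc, P2, Q2]
  have hav : a1' = a2' := by
    have hE : e1 * a1' = e2 * a2' := by
      rw [← E2, ← G2, hu]
    rw [he12] at hE
    exact mul_left_cancel₀ (ne_of_gt Q2) hE
  have htt : t = t' := by
    exact (J.snr_strictMonoOn hκ0 hκ1).injOn
      (Set.mem_Icc.mpr ⟨h.2.1.1.le, h.2.1.2.le⟩)
      (Set.mem_Icc.mpr ⟨h'.2.1.1.le, h'.2.1.2.le⟩) hav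
  have hRpos : 0 < J.RR k s t := by
    rw [RR]
    exact div_pos (mul_pos P1 P3) (by linarith)
  have hRR : J.RR k s t = J.RR k s' t' := by rw [hss, htt]
  have hcos : Real.cos φ = Real.cos φ' := by
    have := h.2.2.2.1.symm.trans (h'.2.2.2.1)
    rw [← hRR] at this
    exact mul_left_cancel₀ (ne_of_gt hRpos) this
  have hsin : Real.sin φ = Real.sin φ' := by
    have := h.2.2.2.2.1.symm.trans (h'.2.2.2.2.1)
    rw [← hRR] at this
    exact mul_left_cancel₀ (ne_of_gt hRpos) this
  exact ⟨hss, htt, hcos, hsin⟩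

set_option maxHeartbeats 1000000 in
/-- Inversion at the unit sphere corresponds to `s ↦ -s`. -/
lemma bicyclide_inv (hk0 : 0 < k) (hk1 : k < 1) {p : E3} {s t φ : ℝ}
    (h : J.IsBicyclide k p s t φ) :
    J.IsBicyclide k ((‖p‖ ^ 2)⁻¹ • p) (-s) t φ := by
  obtain ⟨P1, P2, P3, P4, P6, P5, P8, U1, U2, E2, E1, E3⟩ := J.bicyclide_keys hk0 hk1 h
  obtain ⟨hs, ht, hφ, hp0, hp1, hp2⟩ := h
  have hκ0 : 0 < complMod k := complMod_pos hk0 hk1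
  have hκ1 : complMod k < 1 := complMod_lt_one hk0 hk1
  set κ := complMod k
  set a := J.snr k s
  set c := J.cnr k s
  set d0 := J.dnr k s
  set a' := J.snr κ t
  set c' := J.cnr κ t
  set d' := J.dnr κ t
  have hNval : ‖p‖ ^ 2 = p 0 ^ 2 + p 1 ^ 2 + p 2 ^ 2 := norm_sq_E3 p
  set N := ‖p‖ ^ 2 with hNdef
  have hE3 : N * (1 - a * d') = 1 + a * d' := by rw [hNval]; exact E3
  have hqpos : (0 : ℝ) < 1 - a * d' := by linarith
  have hppos : (0 : ℝ) < 1 + a * d' := by linarith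
  have hNpos : 0 < N := by nlinarith only [hE3, hqpos, hppos]
  have hsm : ∀ i : Fin 3, ((N⁻¹ : ℝ) • p) i = N⁻¹ * p i := fun i => rfl
  have hsneg : J.snr k (-s) = -a := J.snr_neg hk0 hk1 s
  have hcneg : J.cnr k (-s) = c := J.cnr_neg hk0 hk1 s
  have hdneg : J.dnr k (-s) = d0 := J.dnr_neg hk0 hk1 s
  have hRneg : J.RR k (-s) t = c * c' / (1 + a * d') := by
    rw [RR, hsneg, hcneg]
    ring_nf
    rfl
  have hZneg : J.ZZ k (-s) t = d0 * a' / (1 + a * d') := by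
    rw [ZZ, hsneg, hdneg]
    ring_nf
    rfl
  have hqne : (1 - a * d') ≠ 0 := ne_of_gt hqpos
  have hpne : (1 + a * d') ≠ 0 := ne_of_gt hppos
  have hNeq : N = (1 + a * d') / (1 - a * d') := by
    rw [eq_div_iff hqne]; exact hE3
  have hNinv : N⁻¹ = (1 - a * d') / (1 + a * d') := by
    rw [hNeq, inv_div]
  refine ⟨⟨by linarith [hs.2], by linarith [hs.1]⟩, ht, hφ, ?_, ?_, ?_⟩
  · rw [hsm 0, hp0, hRneg, RR, hNinv]
    change (1 - a * d') / (1 + a * d') * (c * c' / (1 - a * d') * Real.cos φ) = _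
    field_simp
  · rw [hsm 1, hp1, hRneg, RR, hNinv]
    change (1 - a * d') / (1 + a * d') * (c * c' / (1 - a * d') * Real.sin φ) = _
    field_simp
  · rw [hsm 2, hp2, hZneg, ZZ, hNinv]
    change (1 - a * d') / (1 + a * d') * (d0 * a' / (1 - a * d')) = _
    field_simp
end JacobiData

end Aux3


/-- The Kelvin transform `Ĝ_{m,n}(r) = ‖r‖⁻¹ G_{m,n}(r/‖r‖²)` of the
internal bi-cyclide harmonic of the first kind satisfies `Ĝ_{m,n} = (-1)^n G_{m,n}`. -/
theorem statement16 (J : JacobiData) (L : LameWangerin J)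
    (k : ℝ) (hk0 : 0 < k) (hk1 : k < 1) (m : ℤ) (n : ℕ)
    (r : E3) (s t φ sa ta φa : ℝ)
    (h1 : J.IsBicyclide k r s t φ)
    (h2 : J.IsBicyclide k ((‖r‖ ^ 2)⁻¹ • r) sa ta φa) :
    ((‖r‖ : ℝ) : ℂ)⁻¹ * L.Gval k m n sa ta φa = (-1) ^ n * L.Gval k m n s t φ := by
  have hκ0 : 0 < complMod k := complMod_pos hk0 hk1
  have hκ1 : complMod k < 1 := complMod_lt_one hk0 hk1
  obtain ⟨P1, P2, P3, P4, P6, P5, P8, U1, U2, E2, E1, E3⟩ := J.bicyclide_keys hk0 hk1 h1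
  have hNval : ‖r‖ ^ 2 = r 0 ^ 2 + r 1 ^ 2 + r 2 ^ 2 := norm_sq_E3 r
  have hE3 : ‖r‖ ^ 2 * (1 - J.snr k s * J.dnr (complMod k) t)
      = 1 + J.snr k s * J.dnr (complMod k) t := by rw [hNval]; exact E3
  have hqpos : (0 : ℝ) < 1 - J.snr k s * J.dnr (complMod k) t := by linarith
  have hppos : (0 : ℝ) < 1 + J.snr k s * J.dnr (complMod k) t := by linarith
  have hNpos : (0 : ℝ) < ‖r‖ ^ 2 := by nlinarith only [hE3, hqpos, hppos]
  have hrpos : (0 : ℝ) < ‖r‖ := by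
    rcases (norm_nonneg r).lt_or_eq with h | h
    · exact h
    · exfalso
      rw [← h] at hNpos
      simp at hNpos
  have hinv := J.bicyclide_inv hk0 hk1 h1
  obtain ⟨hsa, hta, hcos, hsin⟩ := J.bicyclide_unique hk0 hk1 h2 hinv
  have hRpos : 0 < J.RR k s t := by
    rw [JacobiData.RR]
    exact div_pos (mul_pos P1 P3) hqpos
  have hRneg : J.RR k (-s) t = J.RR k s t * (‖r‖ ^ 2)⁻¹ := by
    have hNeq : ‖r‖ ^ 2 = (1 + J.snr k s * J.dnr (complMod k) t)
        / (1 - J.snr k s * J.dnr (complMod k) t) := by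
      rw [eq_div_iff (ne_of_gt hqpos)]
      exact hE3
    rw [JacobiData.RR, JacobiData.RR, J.snr_neg hk0 hk1 s, J.cnr_neg hk0 hk1 s, hNeq, inv_div]
    field_simp
    rw [sub_neg_eq_add, div_self (ne_of_gt hppos)]
  have hrpow : J.RR k (-s) t ^ (-(1/2) : ℝ) = ‖r‖ * J.RR k s t ^ (-(1/2) : ℝ) := by
    rw [hRneg, Real.mul_rpow hRpos.le (inv_nonneg.mpr hNpos.le),
      Real.inv_rpow hNpos.le, Real.rpow_neg hNpos.le, inv_inv,
      ← Real.sqrt_eq_rpow, Real.sqrt_sq (norm_nonneg r)]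
    ring
  have hν : -(1/2 : ℝ) ≤ nuIdx m := by
    have hnn : (0 : ℝ) ≤ (m.natAbs : ℝ) := Nat.cast_nonneg _
    simp only [nuIdx]
    linarith
  have hdom : ((s : ℝ) : ℂ) ∈ J.lwDomain k := by
    refine ⟨?_, Or.inr ?_⟩
    · simp only [Complex.ofReal_im, abs_zero]
      have := J.Kc_pos hk0 hk1
      linarith
    · simp only [Complex.ofReal_re]
      exact abs_lt.mpr ⟨h1.1.1, h1.1.2⟩
  have hW : L.W k (nuIdx m) n ((-s : ℝ) : ℂ) = (-1) ^ n * L.W k (nuIdx m) n ((s : ℝ) : ℂ) := by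
    rw [Complex.ofReal_neg]
    exact L.parity k hk0 hk1 (nuIdx m) hν n _ hdom
  have hexpkey : ∀ θ : ℝ, Complex.exp ((m : ℂ) * Complex.I * (θ : ℂ))
      = (((Real.cos θ : ℝ) : ℂ) + ((Real.sin θ : ℝ) : ℂ) * Complex.I) ^ (m : ℤ) := by
    intro θ
    rw [show ((m : ℂ) * Complex.I * (θ : ℂ)) = (m : ℂ) * ((θ : ℂ) * Complex.I) by ring,
      Complex.exp_int_mul, Complex.exp_mul_I, ← Complex.ofReal_cos, ← Complex.ofReal_sin]
  have hexp : Complex.exp ((m : ℂ) * Complex.I * (φa : ℂ))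
      = Complex.exp ((m : ℂ) * Complex.I * (φ : ℂ)) := by
    rw [hexpkey, hexpkey, hcos, hsin]
  rw [hsa, hta]
  simp only [LameWangerin.Gval]
  rw [hexp, hrpow, hW, Complex.ofReal_mul]
  have hrne : ((‖r‖ : ℝ) : ℂ) ≠ 0 := by
    simp only [ne_eq, Complex.ofReal_eq_zero]
    exact ne_of_gt hrpos
  field_simp

end
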